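/- Let φ be a bounded solution of J*φ = φ on [0,∞) with φ = 0 on (-d,0), and define F(x) = (1/C₀) ∫_0^d ∫_{x-ω}^{x+ω} φ(y) (∫_ω^d J(z) dz) dy dω with C₀ = 2∫_0^d ω (∫_ω^d J(z) dz) dω. Then F''(x) = (1/C₀)((J*φ)(x) - φ(x)) for x ≥ 0; in particular F is affine on [0,∞). -/

import Mathlib

open MeasureTheory Set intervalIntegral

theorem F_second_derivative
    (d : ℝ) (hd : 0 < d)
    (J : ℝ → ℝ) (hJc : Continuous J) (hJ0 : ∀ z, 0 ≤ J z)
    (hJe : ∀ z, J (-z) = J z)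
    (hJs : ∀ z, z ∉ Ioo (-d) d → J z = 0)
    (hJ1 : ∫ z, J z = 1)
    (φ : ℝ → ℝ) (hφc : Continuous φ) (hφb : ∃ C, ∀ x, |φ x| ≤ C)
    (hφ0 : ∀ x ∈ Ioo (-d) (0 : ℝ), φ x = 0)
    (hφeq : ∀ x : ℝ, 0 ≤ x → (∫ y, J (x - y) * φ y) = φ x)
    (C₀ : ℝ)
    (hC₀ : C₀ = 2 * ∫ ω in (0 : ℝ)..d, ω * ∫ z in ω..d, J z)
    (F : ℝ → ℝ)
    (hF : ∀ x : ℝ, F x =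
      (1 / C₀) * ∫ ω in (0 : ℝ)..d, (∫ y in (x - ω)..(x + ω), φ y * ∫ z in ω..d, J z)) :
    (∀ x : ℝ, 0 ≤ x →
      deriv (deriv F) x = (1 / C₀) * ((∫ y, J (x - y) * φ y) - φ x)) ∧
    (∃ A B : ℝ, ∀ x : ℝ, 0 ≤ x → F x = A * x + B) := by
  classical
  obtain ⟨C, hC⟩ := hφb
  have hCnn : 0 ≤ C := (abs_nonneg _).trans (hC 0)
  have hJsupp : HasCompactSupport J :=
    HasCompactSupport.intro isCompact_Icc fun x hx => hJs x fun h => hx (Ioo_subset_Icc_self h)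
  obtain ⟨M, hM⟩ : ∃ M, ∀ z, J z ≤ M := by
    obtain ⟨M, hM⟩ := hJc.bounded_above_of_compact_support hJsupp
    exact ⟨M, fun z => (le_abs_self _).trans (by simpa using hM z)⟩
  have hMnn : 0 ≤ M := (hJ0 0).trans (hM 0)
  have hJabs : ∀ z, |J z| ≤ M := fun z => abs_le.2 ⟨by linarith [hJ0 z], hM z⟩
  set Φ : ℝ → ℝ := fun x => ∫ t in (0:ℝ)..x, φ t with hΦdef
  have hΦ : ∀ x, HasDerivAt Φ (φ x) x := fun x => (hφc.integral_hasStrictDerivAt 0 x).hasDerivAt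
  have hΦc : Continuous Φ := continuous_primitive (fun a b => hφc.intervalIntegrable a b) 0
  set c : ℝ → ℝ := fun ω => ∫ z in ω..d, J z with hcdef
  have hcrepr : ∀ u, c u = (∫ z in (0:ℝ)..d, J z) - ∫ z in (0:ℝ)..u, J z := by
    intro u
    rw [eq_sub_iff_add_eq, add_comm]
    exact integral_add_adjacent_intervals (hJc.intervalIntegrable _ _) (hJc.intervalIntegrable _ _)
  have hc : ∀ ω, HasDerivAt c (-(J ω)) ω := by
    intro ω
    have h1 : HasDerivAt (fun u => ∫ z in (0:ℝ)..u, J z) (J ω) ω :=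
      (hJc.integral_hasStrictDerivAt 0 ω).hasDerivAt
    exact (h1.const_sub _).congr_of_eventuallyEq (Filter.Eventually.of_forall fun u => hcrepr u)
  have hcc : Continuous c := by
    have : c = fun u => (∫ z in (0:ℝ)..d, J z) - ∫ z in (0:ℝ)..u, J z := funext hcrepr
    rw [this]
    exact continuous_const.sub (continuous_primitive (fun a b => hJc.intervalIntegrable a b) 0)
  have hcb : ∀ ω ∈ Set.uIoc (0:ℝ) d, |c ω| ≤ M * d := by
    intro ω hω
    rw [Set.uIoc_of_le hd.le] at hω
    have h1 : ‖∫ z in ω..d, J z‖ ≤ M * |d - ω| :=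
      intervalIntegral.norm_integral_le_of_norm_le_const fun z _ => by
        simpa using hJabs z
    have h2 : |d - ω| ≤ d := by
      rw [abs_le]; constructor <;> [linarith [hω.2]; linarith [hω.1]]
    calc |c ω| ≤ M * |d - ω| := h1
      _ ≤ M * d := by nlinarith
  have hc0 : c 0 = 1 / 2 := by
    have hsup : ∀ x, x ∉ Ioc (-d) d → J x = 0 := fun x hx =>
      hJs x fun h => hx (Ioo_subset_Ioc_self h)
    have h1 : (1:ℝ) = ∫ z in Ioc (-d) d, J z := by
      rw [setIntegral_eq_integral_of_forall_compl_eq_zero hsup, hJ1]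
    have h2 : ∫ z in Ioc (-d) d, J z = ∫ z in (-d)..d, J z :=
      (integral_of_le (by linarith)).symm
    have h3 : (∫ z in (-d)..(0:ℝ), J z) + ∫ z in (0:ℝ)..d, J z = ∫ z in (-d)..d, J z :=
      integral_add_adjacent_intervals (hJc.intervalIntegrable _ _) (hJc.intervalIntegrable _ _)
    have h4 : (∫ z in (-d)..(0:ℝ), J z) = ∫ z in (0:ℝ)..d, J z := by
      have := intervalIntegral.integral_comp_neg (a := (0:ℝ)) (b := d) (f := J)
      simp only [hJe, neg_zero] at this
      exact this.symm
    have : (1:ℝ) = 2 * c 0 := by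
      rw [hcdef]; dsimp only; rw [h1, h2, ← h3, h4]; ring
    linarith
  -- F in terms of Φ
  have hFrepr : ∀ x, F x = (1 / C₀) * ∫ ω in (0:ℝ)..d, (Φ (x + ω) - Φ (x - ω)) * c ω := by
    intro x
    rw [hF x]
    congr 1
    refine integral_congr fun ω _ => ?_
    rw [intervalIntegral.integral_mul_const]
    congr 1
    have h3 := integral_add_adjacent_intervals (μ := volume) (a := (0:ℝ)) (b := x - ω) (c := x + ω)
      (hφc.intervalIntegrable _ _) (hφc.intervalIntegrable _ _)
    rw [hΦdef]; dsimp only; linarith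
  -- first derivative
  set H : ℝ → ℝ := fun x => ∫ ω in (0:ℝ)..d, (φ (x + ω) - φ (x - ω)) * c ω with hHdef
  have hcont1 : ∀ x : ℝ, Continuous fun ω => (Φ (x + ω) - Φ (x - ω)) * c ω := fun x => by
    exact ((hΦc.comp (continuous_const.add continuous_id)).sub
      (hΦc.comp (continuous_const.sub continuous_id))).mul hcc
  have hcont2 : ∀ x : ℝ, Continuous fun ω => (φ (x + ω) - φ (x - ω)) * c ω := fun x => by
    exact ((hφc.comp (continuous_const.add continuous_id)).sub
      (hφc.comp (continuous_const.sub continuous_id))).mul hcc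
  have hFd : ∀ x, HasDerivAt F ((1 / C₀) * H x) x := by
    intro x
    have key : HasDerivAt (fun x => ∫ ω in (0:ℝ)..d, (Φ (x + ω) - Φ (x - ω)) * c ω) (H x) x := by
      have := (intervalIntegral.hasDerivAt_integral_of_dominated_loc_of_deriv_le
        (F := fun x ω => (Φ (x + ω) - Φ (x - ω)) * c ω)
        (F' := fun x ω => (φ (x + ω) - φ (x - ω)) * c ω) (μ := volume)
        (x₀ := x) (a := (0:ℝ)) (b := d) (bound := fun _ => 2 * C * (M * d)) (s := univ) Filter.univ_mem
        (Filter.Eventually.of_forall fun y => (hcont1 y).aestronglyMeasurable)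
        ((hcont1 x).intervalIntegrable _ _)
        ((hcont2 x).aestronglyMeasurable)
        (Filter.Eventually.of_forall fun t ht y _ => ?_)
        intervalIntegrable_const
        (Filter.Eventually.of_forall fun t _ y _ => ?_)).2
      · exact this
      · have h1 : |φ (y + t) - φ (y - t)| ≤ 2 * C := by
          calc |φ (y + t) - φ (y - t)| ≤ |φ (y + t)| + |φ (y - t)| := abs_sub _ _
            _ ≤ 2 * C := by linarith [hC (y + t), hC (y - t)]
        calc ‖(φ (y + t) - φ (y - t)) * c t‖ = |φ (y + t) - φ (y - t)| * |c t| := abs_mul _ _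
          _ ≤ 2 * C * (M * d) := by
              have := hcb t ht
              have := abs_nonneg (φ (y + t) - φ (y - t))
              nlinarith [abs_nonneg (c t)]
      · have h1 : HasDerivAt (fun x : ℝ => Φ (x + t)) (φ (y + t)) y := by
          simpa [Function.comp_def] using (hΦ (y + t)).comp y ((hasDerivAt_id y).add_const t)
        have h2 : HasDerivAt (fun x : ℝ => Φ (x - t)) (φ (y - t)) y := by
          simpa [Function.comp_def] using (hΦ (y - t)).comp y ((hasDerivAt_id y).sub_const t)
        exact (h1.sub h2).mul_const _
    exact (key.const_mul (1 / C₀)).congr_of_eventuallyEq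
      (Filter.Eventually.of_forall fun y => hFrepr y)
  have derivF : deriv F = fun x => (1 / C₀) * H x := funext fun x => (hFd x).deriv
  -- integrate by parts
  set K1 : ℝ → ℝ := fun x => ∫ ω in (0:ℝ)..d, (Φ (x + ω) + Φ (x - ω)) * J ω with hK1def
  set K : ℝ → ℝ := fun x => ∫ ω in (0:ℝ)..d, (φ (x + ω) + φ (x - ω)) * J ω with hKdef
  have hvd1 : ∀ x t : ℝ, HasDerivAt (fun ω : ℝ => Φ (x + ω)) (φ (x + t)) t := by
    intro x t
    simpa [Function.comp_def] using (hΦ (x + t)).comp t ((hasDerivAt_id t).const_add x)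
  have hvd2 : ∀ x t : ℝ, HasDerivAt (fun ω : ℝ => -Φ (x - ω)) (φ (x - t)) t := by
    intro x t
    have h : HasDerivAt (fun ω : ℝ => Φ (x - ω)) (-φ (x - t)) t := by
      have hin : HasDerivAt (fun ω : ℝ => x - ω) (-1) t := by
        simpa using (hasDerivAt_id t).const_sub x
      simpa [Function.comp_def] using (hΦ (x - t)).comp t hin
    exact h.neg.congr_deriv (neg_neg _)
  have hH : ∀ x, H x = K1 x - Φ x := by
    intro x
    have e1 : ∫ ω in (0:ℝ)..d, c ω * φ (x + ω)
        = c d * Φ (x + d) - c 0 * Φ (x + 0) - ∫ ω in (0:ℝ)..d, (-(J ω)) * Φ (x + ω) :=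
      integral_mul_deriv_eq_deriv_mul (fun ω _ => hc ω) (fun ω _ => hvd1 x ω)
        (Continuous.intervalIntegrable (by fun_prop) _ _)
        (Continuous.intervalIntegrable (by fun_prop) _ _)
    have e2 : ∫ ω in (0:ℝ)..d, c ω * φ (x - ω)
        = c d * (-Φ (x - d)) - c 0 * (-Φ (x - 0)) - ∫ ω in (0:ℝ)..d, (-(J ω)) * (-Φ (x - ω)) :=
      integral_mul_deriv_eq_deriv_mul (fun ω _ => hc ω) (fun ω _ => hvd2 x ω)
        (Continuous.intervalIntegrable (by fun_prop) _ _)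
        (Continuous.intervalIntegrable (by fun_prop) _ _)
    have hcd : c d = 0 := integral_same
    have hsplit : H x = (∫ ω in (0:ℝ)..d, c ω * φ (x + ω)) - ∫ ω in (0:ℝ)..d, c ω * φ (x - ω) := by
      rw [hHdef]; dsimp only
      have i1 : IntervalIntegrable (fun ω => c ω * φ (x + ω)) volume 0 d :=
        (Continuous.intervalIntegrable (by fun_prop) _ _)
      have i2 : IntervalIntegrable (fun ω => c ω * φ (x - ω)) volume 0 d :=
        (Continuous.intervalIntegrable (by fun_prop) _ _)
      rw [← integral_sub i1 i2]
      exact integral_congr fun ω _ => by ring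
    have n1 : (∫ ω in (0:ℝ)..d, -J ω * Φ (x + ω)) = -∫ ω in (0:ℝ)..d, J ω * Φ (x + ω) := by
      rw [← intervalIntegral.integral_neg]
      exact integral_congr fun ω _ => by ring
    have n2 : (∫ ω in (0:ℝ)..d, -J ω * -Φ (x - ω)) = ∫ ω in (0:ℝ)..d, J ω * Φ (x - ω) :=
      integral_congr fun ω _ => by ring
    have hK1x : K1 x = (∫ ω in (0:ℝ)..d, J ω * Φ (x + ω)) + ∫ ω in (0:ℝ)..d, J ω * Φ (x - ω) := by
      rw [hK1def]; dsimp only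
      have i1 : IntervalIntegrable (fun ω => J ω * Φ (x + ω)) volume 0 d :=
        (Continuous.intervalIntegrable (by fun_prop) _ _)
      have i2 : IntervalIntegrable (fun ω => J ω * Φ (x - ω)) volume 0 d :=
        (Continuous.intervalIntegrable (by fun_prop) _ _)
      rw [← integral_add i1 i2]
      exact integral_congr fun ω _ => by ring
    rw [hsplit, e1, e2, hcd, hc0, n1, n2, hK1x]
    simp only [add_zero, sub_zero, zero_mul]
    ring
  -- second derivative
  have hKd : ∀ x, HasDerivAt H (K x - φ x) x := by
    intro x
    have hK1d : HasDerivAt K1 (K x) x := by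
      have := (intervalIntegral.hasDerivAt_integral_of_dominated_loc_of_deriv_le
        (F := fun x ω => (Φ (x + ω) + Φ (x - ω)) * J ω)
        (F' := fun x ω => (φ (x + ω) + φ (x - ω)) * J ω) (μ := volume)
        (x₀ := x) (a := (0:ℝ)) (b := d) (bound := fun _ => 2 * C * M) (s := univ) Filter.univ_mem
        (Filter.Eventually.of_forall fun y =>
          (((hΦc.comp (continuous_const.add continuous_id)).add
            (hΦc.comp (continuous_const.sub continuous_id))).mul hJc).aestronglyMeasurable)
        ((((hΦc.comp (continuous_const.add continuous_id)).add
            (hΦc.comp (continuous_const.sub continuous_id))).mul hJc).intervalIntegrable _ _)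
        ((((hφc.comp (continuous_const.add continuous_id)).add
            (hφc.comp (continuous_const.sub continuous_id))).mul hJc).aestronglyMeasurable)
        (Filter.Eventually.of_forall fun t _ y _ => ?_)
        intervalIntegrable_const
        (Filter.Eventually.of_forall fun t _ y _ => ?_)).2
      · exact this
      · have h1 : |φ (y + t) + φ (y - t)| ≤ 2 * C := by
          calc |φ (y + t) + φ (y - t)| ≤ |φ (y + t)| + |φ (y - t)| := abs_add_le _ _
            _ ≤ 2 * C := by linarith [hC (y + t), hC (y - t)]
        calc ‖(φ (y + t) + φ (y - t)) * J t‖ = |φ (y + t) + φ (y - t)| * |J t| := abs_mul _ _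
          _ ≤ 2 * C * M := by nlinarith [hJabs t, abs_nonneg (φ (y + t) + φ (y - t)), abs_nonneg (J t)]
      · have h1 : HasDerivAt (fun x : ℝ => Φ (x + t)) (φ (y + t)) y := by
          simpa [Function.comp_def] using (hΦ (y + t)).comp y ((hasDerivAt_id y).add_const t)
        have h2 : HasDerivAt (fun x : ℝ => Φ (x - t)) (φ (y - t)) y := by
          simpa [Function.comp_def] using (hΦ (y - t)).comp y ((hasDerivAt_id y).sub_const t)
        exact (h1.add h2).mul_const _
    exact (hK1d.sub (hΦ x)).congr_of_eventuallyEq (Filter.Eventually.of_forall fun y => hH y)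
  -- convolution identity
  have hKconv : ∀ x, K x = ∫ y, J (x - y) * φ y := by
    intro x
    have hsup : ∀ y, y ∉ Ioc (x - d) (x + d) → J (x - y) * φ y = 0 := by
      intro y hy
      have : x - y ∉ Ioo (-d) d := by
        simp only [mem_Ioc, not_and_or, not_lt, not_le] at hy
        rcases hy with h | h
        · exact fun hm => absurd hm.2 (by simp only [not_lt]; linarith)
        · exact fun hm => absurd hm.1 (by simp only [not_lt]; linarith)
      rw [hJs _ this, zero_mul]
    have h1 : (∫ y, J (x - y) * φ y) = ∫ y in Ioc (x - d) (x + d), J (x - y) * φ y :=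
      (setIntegral_eq_integral_of_forall_compl_eq_zero hsup).symm
    have h2 : (∫ y in Ioc (x - d) (x + d), J (x - y) * φ y)
        = ∫ y in (x - d)..(x + d), J (x - y) * φ y :=
      (integral_of_le (by linarith)).symm
    have h3 : (∫ ω in (-d)..d, J (x - (x + ω)) * φ (x + ω))
        = ∫ y in (x + -d)..(x + d), J (x - y) * φ y :=
      intervalIntegral.integral_comp_add_left (fun y => J (x - y) * φ y) x
    have h4 : (∫ ω in (-d)..d, J (x - (x + ω)) * φ (x + ω))
        = ∫ ω in (-d)..d, J ω * φ (x + ω) := by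
      refine integral_congr fun ω _ => ?_
      have : x - (x + ω) = -ω := by ring
      rw [this, hJe]
    have h5 : (∫ ω in (-d)..(0:ℝ), J ω * φ (x + ω)) + (∫ ω in (0:ℝ)..d, J ω * φ (x + ω))
        = ∫ ω in (-d)..d, J ω * φ (x + ω) :=
      integral_add_adjacent_intervals
        (Continuous.intervalIntegrable (by fun_prop) _ _)
        (Continuous.intervalIntegrable (by fun_prop) _ _)
    have h6 : (∫ ω in (-d)..(0:ℝ), J ω * φ (x + ω)) = ∫ ω in (0:ℝ)..d, J ω * φ (x - ω) := by
      have := intervalIntegral.integral_comp_neg (a := (0:ℝ)) (b := d)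
        (f := fun ω => J ω * φ (x + ω))
      simp only [neg_zero] at this
      rw [← this]
      refine integral_congr fun ω _ => ?_
      rw [hJe]
      ring_nf
    have h7 : K x = (∫ ω in (0:ℝ)..d, J ω * φ (x + ω)) + ∫ ω in (0:ℝ)..d, J ω * φ (x - ω) := by
      rw [hKdef]; dsimp only
      have i1 : IntervalIntegrable (fun ω => J ω * φ (x + ω)) volume 0 d :=
        (Continuous.intervalIntegrable (by fun_prop) _ _)
      have i2 : IntervalIntegrable (fun ω => J ω * φ (x - ω)) volume 0 d :=
        (Continuous.intervalIntegrable (by fun_prop) _ _)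
      rw [← integral_add i1 i2]
      exact integral_congr fun ω _ => by ring
    rw [h7, h1, h2]
    have hx : x + -d = x - d := by ring
    rw [← hx, ← h3, h4, ← h5, h6]
    ring
  -- conclusion
  have hdd : ∀ x : ℝ, deriv (deriv F) x = (1 / C₀) * (K x - φ x) := by
    intro x
    rw [derivF]
    exact ((hKd x).const_mul (1 / C₀)).deriv
  constructor
  · intro x _
    rw [hdd x, hKconv x]
  · have hcontDF : Continuous (deriv F) := by
      rw [derivF]
      exact continuous_iff_continuousAt.2 fun y => ((hKd y).const_mul (1 / C₀)).continuousAt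
    have hD0 : ∀ x : ℝ, 0 ≤ x → HasDerivAt (deriv F) 0 x := by
      intro x hx
      have h := (hKd x).const_mul (1 / C₀)
      have hz : K x - φ x = 0 := by rw [hKconv x, hφeq x hx, sub_self]
      rw [hz, mul_zero] at h
      exact h.congr_of_eventuallyEq (Filter.Eventually.of_forall fun y => congrFun derivF y)
    have constA : ∀ x : ℝ, 0 ≤ x → deriv F x = deriv F 0 := fun x hx =>
      constant_of_has_deriv_right_zero hcontDF.continuousOn
        (fun y hy => (hD0 y hy.1).hasDerivWithinAt) x ⟨hx, le_refl x⟩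
    set A := deriv F 0 with hA
    have hψ : ∀ x : ℝ, 0 ≤ x → HasDerivAt (fun y => F y - A * y) 0 x := by
      intro x hx
      have h1 : HasDerivAt (fun y : ℝ => A * y) A x := by
        simpa using (hasDerivAt_id x).const_mul A
      have h2 := (hFd x).sub h1
      have h3 : (1 / C₀) * H x = A := by
        rw [← constA x hx, derivF]
      rw [h3, sub_self] at h2
      exact h2
    refine ⟨A, F 0, fun x hx => ?_⟩
    have hψc : Continuous fun y : ℝ => F y - A * y :=
      (continuous_iff_continuousAt.2 fun y => (hFd y).continuousAt).sub
        (continuous_const.mul continuous_id)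
    have hfin := constant_of_has_deriv_right_zero (f := fun y : ℝ => F y - A * y) (a := 0) (b := x)
      hψc.continuousOn (fun y hy => (hψ y hy.1).hasDerivWithinAt) x ⟨hx, le_refl x⟩
    simp only [mul_zero, sub_zero] at hfin
    linarith
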